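/- arXiv:math/0312530 — 2 statements merged into one kernel-verified Lean document; each statement's English description precedes it below -/
import Mathlib

section
/- Let Γ be a 3-valent graph of genus g with x ends. The space of parameterized tropical curves h : Γ → ℝⁿ in a fixed combinatorial type, up to equivalence, is an open convex polyhedral domain in a real affine space of dimension k with k ≥ x + (n-3)(1-g). -/
open Finset

set_option maxHeartbeats 1000000

/-- The space of parameterized tropical curves `h : Γ → ℝⁿ` in a fixed combinatorial
type: the graph `Γ` (vertices `V`, bounded oriented edges `E` with endpoints
`src`, `tgt`, ends `L`) and the primitive direction vectors `dir` of the bounded edges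
are fixed, and the curve is determined by the positions of the vertices, each bounded
edge being mapped onto a nondegenerate segment in the direction `dir e`. -/
def modOfType {V E : Type} (n : ℕ) (src tgt : E → V) (dir : E → Fin n → ℤ) :
    Set (V → Fin n → ℝ) :=
  {pos | ∀ e : E, ∃ t : ℝ, 0 < t ∧
    ∀ i, pos (tgt e) i - pos (src e) i = t * (dir e i : ℝ)}

/-- Let `Γ` be a 3-valent graph of genus `g` with `x` ends.  The space of
parameterized tropical curves `Γ → ℝⁿ` in a fixed combinatorial type, up to
equivalence, is an open convex polyhedral domain in a real affine space of dimension
`k` with `k ≥ x + (n-3)(1-g)`. -/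
theorem dimension_of_combinatorial_type
    (n x g : ℕ) (V E L : Type) [Fintype V] [Fintype E] [Fintype L] [DecidableEq V]
    (src tgt : E → V) (leg : L → V) (w : E → ℕ) (wl : L → ℕ)
    (dir : E → Fin n → ℤ) (dirl : L → Fin n → ℤ)
    -- positive natural weights
    (hw : ∀ e, 0 < w e) (hwl : ∀ l, 0 < wl l)
    -- primitive integer direction vectors
    (hprim : ∀ e (c : ℤ), (∀ i, c ∣ dir e i) → IsUnit c)
    (hpriml : ∀ l (c : ℤ), (∀ i, c ∣ dirl l i) → IsUnit c)
    -- `Γ` is 3-valent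
    (h3 : ∀ v : V,
      (univ.filter fun e : E => src e = v).card +
          (univ.filter fun e : E => tgt e = v).card +
        (univ.filter fun l : L => leg l = v).card = 3)
    -- the balancing condition at every vertex
    (hbal : ∀ v : V,
      ((∑ e ∈ univ.filter (fun e => src e = v), (w e : ℤ) • dir e) -
          ∑ e ∈ univ.filter (fun e => tgt e = v), (w e : ℤ) • dir e) +
        ∑ l ∈ univ.filter (fun l => leg l = v), (wl l : ℤ) • dirl l = 0)
    -- `x` is the number of ends
    (hx : x = Fintype.card L)
    -- `g` is the genus, `dim H₁(Γ) - dim H₀(Γ) + 1`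
    (hg : (g : ℤ) = (Fintype.card E : ℤ) - Fintype.card V + 1) :
    ∃ (A : AffineSubspace ℝ (V → Fin n → ℝ)) (k : ℕ),
      modOfType n src tgt dir ⊆ (A : Set (V → Fin n → ℝ)) ∧
      Convex ℝ (modOfType n src tgt dir) ∧
      IsOpen {q : A | (q : V → Fin n → ℝ) ∈ modOfType n src tgt dir} ∧
      Module.finrank ℝ A.direction = k ∧
      (x : ℤ) + ((n : ℤ) - 3) * (1 - (g : ℤ)) ≤ (k : ℤ) := by
  classical
  -- direction vectors are nonzero
  have hdirZ : ∀ e : E, ∃ i, dir e i ≠ 0 := by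
    intro e
    by_contra h
    push_neg at h
    have h2 : ∀ i, (2:ℤ) ∣ dir e i := fun i => by simp [h i]
    have := hprim e 2 h2
    rw [Int.isUnit_iff] at this
    omega
  have hdir : ∀ e : E, (fun i => (dir e i : ℝ)) ≠ 0 := by
    intro e h
    obtain ⟨i, hi⟩ := hdirZ e
    have := congrFun h i
    simp only [Pi.zero_apply, Int.cast_eq_zero] at this
    exact hi this
  set dR : E → (Fin n → ℝ) := fun e i => (dir e i : ℝ) with hdR
  set sp : E → Submodule ℝ (Fin n → ℝ) := fun e => ℝ ∙ dR e with hsp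
  set δ : (e : E) → ((V → Fin n → ℝ) →ₗ[ℝ] (Fin n → ℝ)) :=
    fun e => (LinearMap.proj (tgt e) : (V → Fin n → ℝ) →ₗ[ℝ] (Fin n → ℝ)) -
      (LinearMap.proj (src e) : (V → Fin n → ℝ) →ₗ[ℝ] (Fin n → ℝ)) with hδ
  set f : (e : E) → ((V → Fin n → ℝ) →ₗ[ℝ] ((Fin n → ℝ) ⧸ sp e)) :=
    fun e => (sp e).mkQ.comp (δ e) with hf
  set S : Submodule ℝ (V → Fin n → ℝ) := LinearMap.ker (LinearMap.pi f) with hS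
  have hmemS : ∀ pos : V → Fin n → ℝ, pos ∈ S ↔
      ∀ e, (fun i => pos (tgt e) i - pos (src e) i) ∈ sp e := by
    intro pos
    rw [hS, LinearMap.mem_ker]
    constructor
    · intro h e
      have := congrFun h e
      rw [LinearMap.pi_apply] at this
      have : (sp e).mkQ (δ e pos) = 0 := this
      rw [Submodule.mkQ_apply, Submodule.Quotient.mk_eq_zero] at this
      exact this
    · intro h
      funext e
      show (sp e).mkQ (δ e pos) = 0
      rw [Submodule.mkQ_apply, Submodule.Quotient.mk_eq_zero]
      exact h e
  -- choose a coordinate where the direction is nonzero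
  have hie : ∀ e : E, ∃ i, dR e i ≠ 0 := by
    intro e
    obtain ⟨i, hi⟩ := hdirZ e
    exact ⟨i, by simpa [hdR] using hi⟩
  choose ie hie' using hie
  refine ⟨S.toAffineSubspace, Module.finrank ℝ S, ?_, ?_, ?_, ?_, ?_⟩
  · -- subset
    intro pos hpos
    obtain _ := hpos
    rw [SetLike.mem_coe, Submodule.mem_toAffineSubspace, hmemS]
    intro e
    obtain ⟨t, ht, heq⟩ := hpos e
    exact Submodule.mem_span_singleton.mpr ⟨t, by funext i; simp [hdR, (heq i).symm]⟩
  · -- convex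
    intro p hp q hq a b ha hb hab
    intro e
    obtain ⟨t1, ht1, h1⟩ := hp e
    obtain ⟨t2, ht2, h2⟩ := hq e
    refine ⟨a * t1 + b * t2, ?_, ?_⟩
    · rcases eq_or_lt_of_le ha with h | h
      · have hb1 : b = 1 := by linarith
        nlinarith
      · nlinarith [mul_nonneg hb ht2.le]
    · intro i
      have e1 := h1 i
      have e2 := h2 i
      simp only [Pi.add_apply, Pi.smul_apply, smul_eq_mul]
      linear_combination a * e1 + b * e2
  · -- openness
    have hset : {q : S.toAffineSubspace | (q : V → Fin n → ℝ) ∈ modOfType n src tgt dir} =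
        ⋂ e : E, {q : S.toAffineSubspace |
          0 < ((q : V → Fin n → ℝ) (tgt e) (ie e) - (q : V → Fin n → ℝ) (src e) (ie e))
            / dR e (ie e)} := by
      ext q
      simp only [Set.mem_setOf_eq, Set.mem_iInter, modOfType]
      constructor
      · intro h e
        obtain ⟨t, ht, heq⟩ := h e
        rw [heq (ie e)]
        rw [mul_div_assoc, div_self (hie' e), mul_one]
        exact ht
      · intro h e
        have hq : (q : V → Fin n → ℝ) ∈ S := Submodule.mem_toAffineSubspace.mp q.2
        rw [hmemS] at hq
        obtain ⟨c, hc⟩ := Submodule.mem_span_singleton.mp (hq e)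
        have hci : ∀ i, (q : V → Fin n → ℝ) (tgt e) i - (q : V → Fin n → ℝ) (src e) i
            = c * dR e i := by
          intro i
          have := congrFun hc i
          simpa [mul_comm] using this.symm
        refine ⟨c, ?_, fun i => hci i⟩
        have := h e
        rw [hci (ie e), mul_div_assoc, div_self (hie' e), mul_one] at this
        exact this
    rw [hset]
    refine isOpen_iInter_of_finite fun e => ?_
    have hcont : Continuous fun q : S.toAffineSubspace =>
        ((q : V → Fin n → ℝ) (tgt e) (ie e) - (q : V → Fin n → ℝ) (src e) (ie e))
          / dR e (ie e) := by
      have c1 : Continuous fun q : S.toAffineSubspace => (q : V → Fin n → ℝ) (tgt e) (ie e) :=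
        (continuous_apply (ie e)).comp ((continuous_apply (tgt e)).comp continuous_subtype_val)
      have c2 : Continuous fun q : S.toAffineSubspace => (q : V → Fin n → ℝ) (src e) (ie e) :=
        (continuous_apply (ie e)).comp ((continuous_apply (src e)).comp continuous_subtype_val)
      exact (c1.sub c2).div_const _
    exact isOpen_lt continuous_const hcont
  · -- finrank
    rw [Submodule.toAffineSubspace_direction]
  · -- the dimension bound
    -- counting: 2|E| + |L| = 3|V|
    have hsrc : ∑ v : V, (univ.filter fun e : E => src e = v).card = Fintype.card E :=
      (Finset.card_eq_sum_card_fiberwise (f := src) (fun e _ => mem_univ _)).symm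
    have htgt : ∑ v : V, (univ.filter fun e : E => tgt e = v).card = Fintype.card E :=
      (Finset.card_eq_sum_card_fiberwise (f := tgt) (fun e _ => mem_univ _)).symm
    have hleg : ∑ v : V, (univ.filter fun l : L => leg l = v).card = Fintype.card L :=
      (Finset.card_eq_sum_card_fiberwise (f := leg) (fun l _ => mem_univ _)).symm
    have hcount : 2 * Fintype.card E + Fintype.card L = 3 * Fintype.card V := by
      have := Finset.sum_congr rfl (fun v (_ : v ∈ (univ : Finset V)) => h3 v)
      rw [Finset.sum_add_distrib, Finset.sum_add_distrib, hsrc, htgt, hleg] at this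
      simp only [Finset.sum_const, Finset.card_univ, smul_eq_mul, mul_one] at this
      omega
    -- rank computation
    have hrk := LinearMap.finrank_range_add_finrank_ker (LinearMap.pi f)
    have hdom : Module.finrank ℝ (V → Fin n → ℝ) = Fintype.card V * n := by
      rw [Module.finrank_pi_fintype]
      simp [Module.finrank_pi]
    have hQ : ∀ e : E, Module.finrank ℝ ((Fin n → ℝ) ⧸ sp e) + 1 = n := by
      intro e
      have h1 : Module.finrank ℝ (sp e) = 1 := finrank_span_singleton (hdir e)
      have h2 := Submodule.finrank_quotient_add_finrank (sp e)
      rw [h1, Module.finrank_pi] at h2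
      simpa using h2
    have hr : Module.finrank ℝ (LinearMap.range (LinearMap.pi f)) ≤
        ∑ e : E, Module.finrank ℝ ((Fin n → ℝ) ⧸ sp e) := by
      refine le_trans (Submodule.finrank_le _) ?_
      rw [Module.finrank_pi_fintype]
    have hsum : (∑ e : E, (Module.finrank ℝ ((Fin n → ℝ) ⧸ sp e) : ℤ)) =
        (Fintype.card E : ℤ) * ((n : ℤ) - 1) := by
      rw [Finset.sum_congr rfl (fun e _ => by
        have := hQ e
        omega : ∀ e ∈ (univ : Finset E),
          (Module.finrank ℝ ((Fin n → ℝ) ⧸ sp e) : ℤ) = (n : ℤ) - 1)]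
      simp [mul_comm]
      ring
    have hk : (Fintype.card V : ℤ) * n - (Fintype.card E : ℤ) * ((n:ℤ) - 1) ≤
        (Module.finrank ℝ S : ℤ) := by
      have h1 : (Module.finrank ℝ (LinearMap.range (LinearMap.pi f)) : ℤ) ≤
          (Fintype.card E : ℤ) * ((n:ℤ) - 1) := by
        rw [← hsum]
        calc (Module.finrank ℝ (LinearMap.range (LinearMap.pi f)) : ℤ)
            ≤ ((∑ e : E, Module.finrank ℝ ((Fin n → ℝ) ⧸ sp e) : ℕ) : ℤ) := by
              exact_mod_cast hr
          _ = _ := by push_cast; ring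
      have h2n : Module.finrank ℝ (LinearMap.range (LinearMap.pi f)) +
          Module.finrank ℝ S = Fintype.card V * n := by
        rw [← hdom, hS]
        exact hrk
      have h2 : (Module.finrank ℝ (LinearMap.range (LinearMap.pi f)) : ℤ) +
          (Module.finrank ℝ S : ℤ) = (Fintype.card V : ℤ) * n := by
        exact_mod_cast h2n
      linarith
    rw [hx, hg]
    have hc : 2 * (Fintype.card E : ℤ) + (Fintype.card L : ℤ) =
        3 * (Fintype.card V : ℤ) := by exact_mod_cast hcount
    nlinarith [hk, hc]
end

section
/- Let V ⊂ (ℂ*)² be the zero locus of a polynomial F(z₁,z₂) = Σ_{(j,k)∈Δ∩ℤ²} a_{j,k} z₁^j z₂^k with complex coefficients, and let F_trop(y₁,y₂) = max_{(j,k)∈Δ∩ℤ², a_{j,k}≠0} (j y₁ + k y₂ + log|a_{j,k}|) be its tropicalization. Then the amoeba Log(V) = {(log|z₁|, log|z₂|) : (z₁,z₂) ∈ V} is contained in the δ-neighborhood of the corner locus of F_trop, where δ = log(#(Δ∩ℤ²) - 1). -/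
open Finset

/-- `log` of the absolute value of a complex number. -/
noncomputable def logAbs (z : ℂ) : ℝ := Real.log ‖z‖

set_option maxHeartbeats 1000000 in
/-- Let `V ⊆ (ℂ*)²` be the zero locus of a Laurent polynomial
`F(z₁,z₂) = Σ_{(j,k) ∈ Δ ∩ ℤ²} a_{j,k} z₁ʲ z₂ᵏ` and let
`F_trop(y₁,y₂) = max_{a_{j,k} ≠ 0} (j y₁ + k y₂ + log|a_{j,k}|)` be its tropicalization.
Then the amoeba `Log(V)` is contained in the `δ`-neighborhood (Euclidean metric on
`ℝ²`) of the corner locus of `F_trop`, where `δ = log(#(Δ ∩ ℤ²) - 1)`. -/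
theorem amoeba_in_neighborhood_of_tropicalization
    (A : Finset (ℤ × ℤ)) (a : ℤ × ℤ → ℂ)
    -- `B` is the support of the polynomial inside `Δ ∩ ℤ² = A`
    (B : Finset (ℤ × ℤ)) (hB : ∀ j, j ∈ B ↔ j ∈ A ∧ a j ≠ 0) (hBne : B.Nonempty)
    -- a point of the curve `V`
    (z : ℂ × ℂ) (hz1 : z.1 ≠ 0) (hz2 : z.2 ≠ 0)
    (hzV : (∑ j ∈ A, a j * z.1 ^ j.1 * z.2 ^ j.2) = 0) :
    -- there is a point `y` of the corner locus of `F_trop` within distance `δ` of `Log z`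
    ∃ y : ℝ × ℝ,
      (∃ j ∈ B, ∃ k ∈ B, j ≠ k ∧
        (j.1 : ℝ) * y.1 + (j.2 : ℝ) * y.2 + logAbs (a j) =
          B.sup' hBne (fun j' => (j'.1 : ℝ) * y.1 + (j'.2 : ℝ) * y.2 + logAbs (a j')) ∧
        (k.1 : ℝ) * y.1 + (k.2 : ℝ) * y.2 + logAbs (a k) =
          B.sup' hBne (fun j' => (j'.1 : ℝ) * y.1 + (j'.2 : ℝ) * y.2 + logAbs (a j'))) ∧
      Real.sqrt ((logAbs z.1 - y.1) ^ 2 + (logAbs z.2 - y.2) ^ 2) ≤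
        Real.log ((A.card : ℝ) - 1) := by
  classical
  set x1 : ℝ := logAbs z.1 with hx1
  set x2 : ℝ := logAbs z.2 with hx2
  set g : ℤ × ℤ → ℝ → ℝ → ℝ :=
    fun j y1 y2 => (j.1 : ℝ) * y1 + (j.2 : ℝ) * y2 + logAbs (a j) with hgdef
  have hz1' : (0 : ℝ) < ‖z.1‖ := norm_pos_iff.mpr hz1
  have hz2' : (0 : ℝ) < ‖z.2‖ := norm_pos_iff.mpr hz2
  -- exp formula for terms
  have habs : ∀ j ∈ B,
      ‖a j * z.1 ^ j.1 * z.2 ^ j.2‖ = Real.exp (g j x1 x2) := by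
    intro j hj
    have haj : a j ≠ 0 := ((hB j).1 hj).2
    have h1 : ‖z.1 ^ j.1‖ = ‖z.1‖ ^ j.1 := norm_zpow _ _
    have h2 : ‖z.2 ^ j.2‖ = ‖z.2‖ ^ j.2 := norm_zpow _ _
    rw [norm_mul, norm_mul, h1, h2]
    simp only [hgdef, hx1, hx2, logAbs]
    rw [Real.exp_add, Real.exp_add, Real.exp_log (norm_pos_iff.mpr haj)]
    rw [mul_comm ((j.1 : ℝ)) _, mul_comm ((j.2 : ℝ)) _]
    rw [← Real.rpow_def_of_pos hz1', ← Real.rpow_def_of_pos hz2']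
    rw [Real.rpow_intCast, Real.rpow_intCast]
    ring
  have hBsub : B ⊆ A := fun j hj => ((hB j).1 hj).1
  have hsumB : (∑ j ∈ B, a j * z.1 ^ j.1 * z.2 ^ j.2) = 0 := by
    rw [Finset.sum_subset hBsub]
    · exact hzV
    · intro j hjA hjB
      have : a j = 0 := by
        by_contra h
        exact hjB ((hB j).2 ⟨hjA, h⟩)
      simp [this]
  -- the maximizer at x
  obtain ⟨j', hj'B, hj'max⟩ := Finset.exists_mem_eq_sup' hBne (fun j => g j x1 x2)
  have hmax : ∀ l ∈ B, g l x1 x2 ≤ g j' x1 x2 := by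
    intro l hl
    exact (Finset.le_sup' (fun j => g j x1 x2) hl).trans hj'max.le
  have haj' : a j' ≠ 0 := ((hB j').1 hj'B).2
  have hterm_ne : a j' * z.1 ^ j'.1 * z.2 ^ j'.2 ≠ 0 := by
    exact mul_ne_zero (mul_ne_zero haj' (zpow_ne_zero _ hz1)) (zpow_ne_zero _ hz2)
  have hkey : a j' * z.1 ^ j'.1 * z.2 ^ j'.2
      = - ∑ j ∈ B.erase j', a j * z.1 ^ j.1 * z.2 ^ j.2 := by
    have h := Finset.add_sum_erase B (fun j => a j * z.1 ^ j.1 * z.2 ^ j.2) hj'B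
    rw [hsumB] at h
    linear_combination h
  have hEne : (B.erase j').Nonempty := by
    rw [Finset.nonempty_iff_ne_empty]
    intro h
    rw [h, Finset.sum_empty, neg_zero] at hkey
    exact hterm_ne hkey
  set m : ℝ := (B.erase j').sup' hEne (fun j => g j x1 x2) with hm
  obtain ⟨k, hkE, hkm⟩ := Finset.exists_mem_eq_sup' hEne (fun j => g j x1 x2)
  rw [← hm] at hkm
  have hkB : k ∈ B := Finset.mem_of_mem_erase hkE
  have hknej : k ≠ j' := Finset.ne_of_mem_erase hkE
  have hcard2 : 2 ≤ B.card := Finset.one_lt_card.2 ⟨j', hj'B, k, hkB, hknej.symm⟩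
  -- key inequality from the vanishing of the polynomial
  have hineq : Real.exp (g j' x1 x2) ≤ ((B.card : ℝ) - 1) * Real.exp m := by
    have h1 : Real.exp (g j' x1 x2)
        ≤ ∑ j ∈ B.erase j', Real.exp (g j x1 x2) := by
      rw [← habs j' hj'B, hkey, norm_neg]
      calc ‖∑ j ∈ B.erase j', a j * z.1 ^ j.1 * z.2 ^ j.2‖
          ≤ ∑ j ∈ B.erase j', ‖a j * z.1 ^ j.1 * z.2 ^ j.2‖ :=
            norm_sum_le _ _
        _ = ∑ j ∈ B.erase j', Real.exp (g j x1 x2) :=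
            Finset.sum_congr rfl fun j hj => habs j (Finset.mem_of_mem_erase hj)
    have h2 : ∑ j ∈ B.erase j', Real.exp (g j x1 x2)
        ≤ ((B.erase j').card : ℝ) * Real.exp m := by
      have := Finset.sum_le_card_nsmul (B.erase j') (fun j => Real.exp (g j x1 x2))
        (Real.exp m) (fun j hj => Real.exp_le_exp.2 (by rw [hm]; exact Finset.le_sup' (fun j => g j x1 x2) hj))
      simpa [nsmul_eq_mul] using this
    have h3 : ((B.erase j').card : ℝ) = (B.card : ℝ) - 1 := by
      rw [Finset.card_erase_of_mem hj'B]
      have h4 : 1 ≤ B.card := le_trans (by norm_num) hcard2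
      push_cast [Nat.cast_sub h4]
      ring
    rw [h3] at h2
    exact le_trans h1 h2
  set gap : ℝ := g j' x1 x2 - m with hgap
  have hgap0 : 0 ≤ gap := by
    have h := hmax k hkB
    simp only [hgap, hkm]
    linarith
  have hcardA : 2 ≤ A.card := le_trans hcard2 (Finset.card_le_card hBsub)
  have hAone : (1 : ℝ) ≤ (A.card : ℝ) - 1 := by
    have : (2 : ℝ) ≤ (A.card : ℝ) := by exact_mod_cast hcardA
    linarith
  have hgapδ : gap ≤ Real.log ((A.card : ℝ) - 1) := by
    rw [Real.le_log_iff_exp_le (by linarith)]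
    have h5 : Real.exp gap ≤ (B.card : ℝ) - 1 := by
      rw [hgap, Real.exp_sub, div_le_iff₀ (Real.exp_pos m)]
      exact hineq
    have hBA : ((B.card : ℝ)) ≤ (A.card : ℝ) := by
      exact_mod_cast Finset.card_le_card hBsub
    linarith
  -- geometry: move toward the corner locus
  set v1 : ℝ := (k.1 : ℝ) - (j'.1 : ℝ) with hv1
  set v2 : ℝ := (k.2 : ℝ) - (j'.2 : ℝ) with hv2
  have hv2sum : (1 : ℝ) ≤ v1 ^ 2 + v2 ^ 2 := by
    have hor : k.1 ≠ j'.1 ∨ k.2 ≠ j'.2 := by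
      by_contra h
      push_neg at h
      exact hknej (Prod.ext h.1 h.2)
    have h1 : (1 : ℤ) ≤ (k.1 - j'.1) ^ 2 + (k.2 - j'.2) ^ 2 := by
      rcases hor with h | h
      · have hd : k.1 - j'.1 ≠ 0 := sub_ne_zero.2 h
        have := Int.one_le_abs hd
        nlinarith [sq_nonneg (k.2 - j'.2), sq_abs (k.1 - j'.1)]
      · have hd : k.2 - j'.2 ≠ 0 := sub_ne_zero.2 h
        have := Int.one_le_abs hd
        nlinarith [sq_nonneg (k.1 - j'.1), sq_abs (k.2 - j'.2)]
    have h2 : (1 : ℝ) ≤ ((k.1 - j'.1 : ℤ) : ℝ) ^ 2 + ((k.2 - j'.2 : ℤ) : ℝ) ^ 2 := by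
      exact_mod_cast h1
    push_cast at h2
    simp only [hv1, hv2]
    linarith
  set n : ℝ := Real.sqrt (v1 ^ 2 + v2 ^ 2) with hn
  have hn1 : 1 ≤ n := Real.one_le_sqrt.2 hv2sum
  have hnpos : 0 < n := lt_of_lt_of_le one_pos hn1
  have hnsq : n ^ 2 = v1 ^ 2 + v2 ^ 2 := Real.sq_sqrt (by positivity)
  set u1 : ℝ := v1 / n with hu1
  set u2 : ℝ := v2 / n with hu2
  have husq : u1 ^ 2 + u2 ^ 2 = 1 := by
    have h : u1 ^ 2 + u2 ^ 2 = (v1 ^ 2 + v2 ^ 2) / n ^ 2 := by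
      simp only [hu1, hu2]; ring
    rw [h, ← hnsq, div_self (pow_ne_zero 2 hnpos.ne')]
  set s : ℤ × ℤ → ℝ :=
    fun l => ((l.1 : ℝ) - (j'.1 : ℝ)) * u1 + ((l.2 : ℝ) - (j'.2 : ℝ)) * u2 with hs
  set c : ℤ × ℤ → ℝ := fun l => g l x1 x2 - g j' x1 x2 with hc
  have haffine : ∀ (l : ℤ × ℤ) (t : ℝ),
      g l (x1 + t * u1) (x2 + t * u2) - g j' (x1 + t * u1) (x2 + t * u2)
        = c l + t * s l := by
    intro l t
    simp only [hgdef, hc, hs]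
    ring
  have hcle : ∀ l ∈ B, c l ≤ 0 := by
    intro l hl
    have := hmax l hl
    simp only [hc]
    linarith
  have hsk : s k = n := by
    have h : s k = (v1 ^ 2 + v2 ^ 2) / n := by
      simp only [hs, hu1, hu2, hv1, hv2]; ring
    rw [h, ← hnsq, sq, mul_div_assoc, div_self hnpos.ne', mul_one]
  have hck : c k = -gap := by
    simp only [hc, hgap, hkm]
    ring
  set T : Finset (ℤ × ℤ) := (B.erase j').filter (fun l => 0 < s l) with hT
  have hkT : k ∈ T := Finset.mem_filter.2 ⟨hkE, by rw [hsk]; exact hnpos⟩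
  have hTne : T.Nonempty := ⟨k, hkT⟩
  set t0 : ℝ := T.inf' hTne (fun l => -(c l) / s l) with ht0
  obtain ⟨l0, hl0T, hl0eq⟩ := Finset.exists_mem_eq_inf' hTne (fun l => -(c l) / s l)
  rw [← ht0] at hl0eq
  have hl0E : l0 ∈ B.erase j' := (Finset.mem_filter.1 hl0T).1
  have hl0s : 0 < s l0 := (Finset.mem_filter.1 hl0T).2
  have hl0B : l0 ∈ B := Finset.mem_of_mem_erase hl0E
  have hl0ne : l0 ≠ j' := Finset.ne_of_mem_erase hl0E
  have ht00 : 0 ≤ t0 := by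
    rw [ht0]
    apply Finset.le_inf'
    intro l hl
    have hlB : l ∈ B := Finset.mem_of_mem_erase (Finset.mem_filter.1 hl).1
    have hls : 0 < s l := (Finset.mem_filter.1 hl).2
    exact div_nonneg (by linarith [hcle l hlB]) (le_of_lt hls)
  have ht0gap : t0 ≤ gap := by
    have h1 : t0 ≤ -(c k) / s k := by
      rw [ht0]; exact Finset.inf'_le _ hkT
    rw [hck, hsk, neg_neg] at h1
    calc t0 ≤ gap / n := h1
      _ ≤ gap := div_le_self hgap0 hn1
  -- the maximum at the new point
  have hmaxy : ∀ l ∈ B,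
      g l (x1 + t0 * u1) (x2 + t0 * u2) ≤ g j' (x1 + t0 * u1) (x2 + t0 * u2) := by
    intro l hl
    have hgoal : c l + t0 * s l ≤ 0 := by
      rcases eq_or_ne l j' with rfl | hlne
      · have hc0 : c l = 0 := by simp [hc]
        have hs0 : s l = 0 := by simp [hs]
        rw [hc0, hs0]; simp
      · rcases le_or_gt (s l) 0 with hsl | hsl
        · nlinarith [hcle l hl]
        · have hlT : l ∈ T := Finset.mem_filter.2 ⟨Finset.mem_erase.2 ⟨hlne, hl⟩, hsl⟩
          have h6 : t0 ≤ -(c l) / s l := by rw [ht0]; exact Finset.inf'_le _ hlT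
          have h7 : t0 * s l ≤ -(c l) := by
            rw [le_div_iff₀ hsl] at h6
            linarith
          linarith
    linarith [haffine l t0]
  have hsup : B.sup' hBne (fun l => g l (x1 + t0 * u1) (x2 + t0 * u2))
      = g j' (x1 + t0 * u1) (x2 + t0 * u2) :=
    le_antisymm (Finset.sup'_le _ _ hmaxy) (Finset.le_sup' (fun l => g l (x1 + t0 * u1) (x2 + t0 * u2)) hj'B)
  have htie : g l0 (x1 + t0 * u1) (x2 + t0 * u2)
      = g j' (x1 + t0 * u1) (x2 + t0 * u2) := by
    have h8 := haffine l0 t0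
    have h9 : t0 * s l0 = -(c l0) := by
      rw [hl0eq]
      field_simp
    linarith
  refine ⟨(x1 + t0 * u1, x2 + t0 * u2), ⟨j', hj'B, l0, hl0B, hl0ne.symm, ?_, ?_⟩, ?_⟩
  · exact hsup.symm
  · rw [← htie] at hsup
    exact hsup.symm
  · have hdist : (x1 - (x1 + t0 * u1)) ^ 2 + (x2 - (x2 + t0 * u2)) ^ 2 = t0 ^ 2 := by
      have : (x1 - (x1 + t0 * u1)) ^ 2 + (x2 - (x2 + t0 * u2)) ^ 2
          = t0 ^ 2 * (u1 ^ 2 + u2 ^ 2) := by ring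
      rw [this, husq]; ring
    calc Real.sqrt ((x1 - (x1 + t0 * u1)) ^ 2 + (x2 - (x2 + t0 * u2)) ^ 2)
        = t0 := by rw [hdist, Real.sqrt_sq ht00]
      _ ≤ Real.log ((A.card : ℝ) - 1) := le_trans ht0gap hgapδ
end
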